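/- Assume neutral competition α = β = 1, no treatment D ≡ 0, and equal death-to-growth ratios d_S/r_S = d_R/r_R = δ with 0 < δ < 1. Let (S,R) be a solution on [0, ∞) with S(0) > 0, R(0) > 0 and N(0) = S(0) + R(0) < K(1 − δ). Then for all t ≥ 0: S(t) > 0, R(t) > 0, N(t) < K(1 − δ), and both dS/dt(t) > 0 and dR/dt(t) > 0. -/

import Mathlib

open Set

/-- Positivity preservation for scalar linear ODEs `x' = a x` on `[0,∞)`. -/
lemma pos_of_lin_ode (x a : ℝ → ℝ)
    (hx : ∀ t ∈ Set.Ici (0:ℝ), HasDerivAt x (a t * x t) t)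
    (ha : ∀ t ∈ Set.Ici (0:ℝ), ContinuousAt a t)
    (h0 : 0 < x 0) : ∀ t ∈ Set.Ici (0:ℝ), 0 < x t := by
  intro T hT
  by_contra hcon
  push_neg at hcon
  have hT0 : 0 < T := by
    rcases eq_or_lt_of_le (Set.mem_Ici.mp hT) with h | h
    · exfalso; rw [← h] at hcon; linarith
    · exact h
  set E : Set ℝ := {t | t ∈ Set.Icc 0 T ∧ x t ≤ 0} with hE
  have hTE : T ∈ E := ⟨⟨le_of_lt hT0, le_refl T⟩, hcon⟩
  have hEne : E.Nonempty := ⟨T, hTE⟩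
  have hbdd : BddBelow E := ⟨0, fun t ht => ht.1.1⟩
  set t₀ := sInf E with ht₀def
  have ht₀mem : t₀ ∈ Set.Icc 0 T :=
    ⟨le_csInf hEne (fun t ht => ht.1.1), csInf_le hbdd hTE⟩
  have hlt : ∀ t, 0 ≤ t → t < t₀ → 0 < x t := by
    intro t ht htlt
    by_contra hc
    push_neg at hc
    have htE : t ∈ E := ⟨⟨ht, le_trans htlt.le ht₀mem.2⟩, hc⟩
    exact absurd (csInf_le hbdd htE) (not_le.mpr htlt)
  have hxt₀ : x t₀ ≤ 0 := by
    by_contra hc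
    push_neg at hc
    have hcont : ContinuousAt x t₀ := (hx t₀ ht₀mem.1).continuousAt
    have hnb : x ⁻¹' (Set.Ioi 0) ∈ nhds t₀ := hcont.preimage_mem_nhds (Ioi_mem_nhds hc)
    obtain ⟨ε, hε, hball⟩ := Metric.mem_nhds_iff.mp hnb
    obtain ⟨e, heE, he⟩ := exists_lt_of_csInf_lt hEne (lt_add_of_pos_right t₀ hε)
    have het₀ : t₀ ≤ e := csInf_le hbdd heE
    have : e ∈ Metric.ball t₀ ε := by
      rw [Metric.mem_ball, Real.dist_eq, abs_lt]; constructor <;> linarith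
    have := hball this
    simp only [Set.mem_preimage, Set.mem_Ioi] at this
    linarith [heE.2]
  have ht₀0 : 0 < t₀ := by
    rcases eq_or_lt_of_le ht₀mem.1 with h | h
    · exfalso; rw [← h] at hxt₀; linarith
    · exact h
  -- bound a on [0, t₀]
  obtain ⟨C, hC⟩ := (isCompact_Icc (a := (0:ℝ)) (b := t₀)).exists_bound_of_continuousOn
    (fun t ht => (ha t ht.1).continuousWithinAt)
  set ψ : ℝ → ℝ := fun t => x t * Real.exp (C * t) with hψdef
  have hψ : ∀ t ∈ Set.Icc (0:ℝ) t₀, HasDerivAt ψ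
      ((a t * x t) * Real.exp (C * t) + x t * (Real.exp (C * t) * C)) t := by
    intro t ht
    have h1 : HasDerivAt (fun t => Real.exp (C * t)) (Real.exp (C * t) * C) t := by
      simpa using ((hasDerivAt_id t).const_mul C).exp
    exact (hx t ht.1).mul h1
  have hmono : MonotoneOn ψ (Set.Icc 0 t₀) := by
    apply monotoneOn_of_deriv_nonneg (convex_Icc 0 t₀)
    · exact fun t ht => (hψ t ht).continuousAt.continuousWithinAt
    · intro t ht
      rw [interior_Icc] at ht
      exact (hψ t ⟨ht.1.le, ht.2.le⟩).differentiableAt.differentiableWithinAt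
    · intro t ht
      rw [interior_Icc] at ht
      rw [(hψ t ⟨ht.1.le, ht.2.le⟩).deriv]
      have hxpos : 0 < x t := hlt t ht.1.le ht.2
      have haC : -C ≤ a t := by
        have := hC t ⟨ht.1.le, ht.2.le⟩
        rw [Real.norm_eq_abs, abs_le] at this
        linarith [this.1]
      have hexp : (0:ℝ) < Real.exp (C * t) := Real.exp_pos _
      nlinarith [mul_nonneg (mul_nonneg hxpos.le hexp.le) (by linarith : (0:ℝ) ≤ a t + C)]
  have h1 : ψ 0 ≤ ψ t₀ := hmono ⟨le_refl 0, ht₀0.le⟩ ⟨ht₀0.le, le_refl t₀⟩ ht₀0.le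
  have h2 : ψ 0 = x 0 := by simp [hψdef]
  have h3 : ψ t₀ ≤ 0 := mul_nonpos_of_nonpos_of_nonneg hxt₀ (Real.exp_pos _).le
  linarith

/-- under neutral competition `α = β = 1`, no treatment `D ≡ 0`, and
equal death-to-growth ratios `d_S/r_S = d_R/r_R = δ ∈ (0,1)`, every solution on
`[0,∞)` with `S(0) > 0`, `R(0) > 0` and `N(0) < K(1-δ)` satisfies, for all
`t ≥ 0`: `S(t) > 0`, `R(t) > 0`, `N(t) < K(1-δ)`, and both derivatives
`dS/dt(t) > 0` and `dR/dt(t) > 0`. -/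
theorem stmt_10 (K rS rR dS dR δ : ℝ) (S R : ℝ → ℝ)
    (hK : 0 < K) (hrS : 0 < rS) (hrR : 0 < rR)
    (hδ0 : 0 < δ) (hδ1 : δ < 1)
    (hdS : dS = δ * rS) (hdR : dR = δ * rR)
    (hSode : ∀ t ∈ Set.Ici (0 : ℝ),
      HasDerivAt S (rS * (1 - (S t + R t) / K) * S t - dS * S t) t)
    (hRode : ∀ t ∈ Set.Ici (0 : ℝ),
      HasDerivAt R (rR * (1 - (S t + R t) / K) * R t - dR * R t) t)
    (hS0 : 0 < S 0) (hR0 : 0 < R 0) (hN0 : S 0 + R 0 < K * (1 - δ)) :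
    ∀ t ∈ Set.Ici (0 : ℝ),
      0 < S t ∧ 0 < R t ∧ S t + R t < K * (1 - δ) ∧
      0 < rS * (1 - (S t + R t) / K) * S t - dS * S t ∧
      0 < rR * (1 - (S t + R t) / K) * R t - dR * R t := by
  have hKne : K ≠ 0 := ne_of_gt hK
  have hScont : ∀ t ∈ Set.Ici (0:ℝ), ContinuousAt S t := fun t ht => (hSode t ht).continuousAt
  have hRcont : ∀ t ∈ Set.Ici (0:ℝ), ContinuousAt R t := fun t ht => (hRode t ht).continuousAt
  -- positivity of S
  have hSpos : ∀ t ∈ Set.Ici (0:ℝ), 0 < S t := by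
    apply pos_of_lin_ode S (fun t => rS * (1 - (S t + R t) / K) - dS)
    · intro t ht
      have := hSode t ht
      convert this using 1
      ring
    · intro t ht
      exact (continuousAt_const.mul (continuousAt_const.sub
        (((hScont t ht).add (hRcont t ht)).div_const K))).sub continuousAt_const
    · exact hS0
  have hRpos : ∀ t ∈ Set.Ici (0:ℝ), 0 < R t := by
    apply pos_of_lin_ode R (fun t => rR * (1 - (S t + R t) / K) - dR)
    · intro t ht
      have := hRode t ht
      convert this using 1
      ring
    · intro t ht
      exact (continuousAt_const.mul (continuousAt_const.sub
        (((hScont t ht).add (hRcont t ht)).div_const K))).sub continuousAt_const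
    · exact hR0
  -- positivity of u = K(1-δ) - N
  have hupos : ∀ t ∈ Set.Ici (0:ℝ), 0 < K * (1 - δ) - (S t + R t) := by
    apply pos_of_lin_ode (fun t => K * (1 - δ) - (S t + R t))
      (fun t => -((rS * S t + rR * R t) / K))
    · intro t ht
      have h : HasDerivAt (fun t => K * (1 - δ) - (S t + R t)) _ t :=
        HasDerivAt.const_sub (K * (1 - δ)) ((hSode t ht).add (hRode t ht))
      convert h using 1
      rw [hdS, hdR]
      field_simp
      ring
    · intro t ht
      exact ((((continuousAt_const.mul (hScont t ht)).add
        (continuousAt_const.mul (hRcont t ht))).div_const K)).neg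
    · simpa using hN0
  intro t ht
  have hS := hSpos t ht
  have hR := hRpos t ht
  have hu := hupos t ht
  have hNlt : S t + R t < K * (1 - δ) := by linarith
  have hfac : 0 < (1 - δ) - (S t + R t) / K := by
    rw [sub_pos, div_lt_iff₀ hK]
    linarith [hNlt]
  refine ⟨hS, hR, hNlt, ?_, ?_⟩
  · have : rS * (1 - (S t + R t) / K) * S t - dS * S t
        = rS * S t * ((1 - δ) - (S t + R t) / K) := by rw [hdS]; ring
    rw [this]
    exact mul_pos (mul_pos hrS hS) hfac
  · have : rR * (1 - (S t + R t) / K) * R t - dR * R t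
        = rR * R t * ((1 - δ) - (S t + R t) / K) := by rw [hdR]; ring
    rw [this]
    exact mul_pos (mul_pos hrR hR) hfac
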